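/- Let κ ∈ Γ_k^+ with 1 ≤ k < n and κ_1 ≥ ⋯ ≥ κ_n. If additionally σ_k(κ) ≥ c > 0 and all κ_i ≤ K, then (n−k)σ_{k−1}(κ) + κ_1 σ_{k−2}(κ|1) ≥ c' for a constant c' > 0 depending only on n, k, c, K. In particular σ_{k−1}(κ) ≥ C(n,k−1) (σ_k(κ)/C(n,k))^{(k−1)/k} > 0 and σ_{k−2}(κ|1) > 0. -/

import Mathlib

open Finset

noncomputable def esym {n : ℕ} (m : ℕ) (κ : Fin n → ℝ) : ℝ :=
  ∑ s ∈ Finset.powersetCard m (Finset.univ : Finset (Fin n)), ∏ i ∈ s, κ i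

noncomputable def esymRem {n : ℕ} (m : ℕ) (κ : Fin n → ℝ) (i : Fin n) : ℝ :=
  ∑ s ∈ Finset.powersetCard m ((Finset.univ : Finset (Fin n)).erase i), ∏ j ∈ s, κ j

namespace StmtAux
open Multiset Polynomial

lemma esymm_zero' (s : Multiset ℝ) : s.esymm 0 = 1 := by
  simp [Multiset.esymm]

lemma esymm_cons (a : ℝ) (s : Multiset ℝ) (j : ℕ) :
    (a ::ₘ s).esymm (j + 1) = s.esymm (j + 1) + a * s.esymm j := by
  simp only [Multiset.esymm, Multiset.powersetCard_cons, Multiset.map_add, Multiset.sum_add,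
    Multiset.map_map, Function.comp_def, Multiset.prod_cons]
  rw [Multiset.sum_map_mul_left]

lemma esymm_eq_zero_of_lt (s : Multiset ℝ) (j : ℕ) (h : Multiset.card s < j) :
    s.esymm j = 0 := by
  simp [Multiset.esymm, Multiset.powersetCard_eq_empty _ h]

lemma esymm_card_eq_prod (s : Multiset ℝ) : s.esymm (Multiset.card s) = s.prod := by
  induction s using Multiset.induction with
  | empty => simp [Multiset.esymm]
  | cons a s ih =>
      rw [Multiset.card_cons, esymm_cons, ih, esymm_eq_zero_of_lt s _ (Nat.lt_succ_self _),
        Multiset.prod_cons, zero_add]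

lemma esymm_one' (s : Multiset ℝ) : s.esymm 1 = s.sum := by
  simp [Multiset.esymm, Multiset.powersetCard_one, Multiset.map_map]

lemma esymm_reverse (s : Multiset ℝ) (h0 : (0:ℝ) ∉ s) :
    ∀ j ≤ Multiset.card s,
      s.prod * (s.map (·⁻¹)).esymm j = s.esymm (Multiset.card s - j) := by
  induction s using Multiset.induction with
  | empty =>
      intro j hj
      simp only [Multiset.card_zero, Nat.le_zero] at hj
      subst hj
      simp [esymm_zero']
  | cons a s ih =>
      intro j hj
      have ha : a ≠ 0 := fun h => h0 (h ▸ Multiset.mem_cons_self a s)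
      have h0s : (0:ℝ) ∉ s := fun h => h0 (Multiset.mem_cons_of_mem h)
      rw [Multiset.card_cons] at hj ⊢
      match j with
      | 0 =>
          simp only [esymm_zero', mul_one, Nat.sub_zero]
          rw [← Multiset.card_cons a s, esymm_card_eq_prod]
      | (j' + 1) =>
          rw [Multiset.map_cons, esymm_cons, Multiset.prod_cons]
          rcases Nat.lt_or_ge j' (Multiset.card s) with hlt | hge
          · have h1 : j' + 1 ≤ Multiset.card s := hlt
            have e1 := ih h0s (j' + 1) h1
            have e2 := ih h0s j' (Nat.le_of_lt hlt)
            have hsub : Multiset.card s + 1 - (j' + 1) = (Multiset.card s - (j' + 1)) + 1 := by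
              omega
            rw [hsub, esymm_cons]
            have hsub2 : Multiset.card s - (j' + 1) + 1 = Multiset.card s - j' := by omega
            calc a * Multiset.prod s * ((s.map (·⁻¹)).esymm (j' + 1)
                  + a⁻¹ * (s.map (·⁻¹)).esymm j')
                = a * (Multiset.prod s * (s.map (·⁻¹)).esymm (j' + 1))
                  + (a * a⁻¹) * (Multiset.prod s * (s.map (·⁻¹)).esymm j') := by ring
              _ = a * s.esymm (Multiset.card s - (j' + 1)) + s.esymm (Multiset.card s - j') := by
                  rw [e1, e2, mul_inv_cancel₀ ha, one_mul]
              _ = s.esymm (Multiset.card s - (j' + 1) + 1)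
                  + a * s.esymm (Multiset.card s - (j' + 1)) := by rw [hsub2]; ring
          · have hj' : j' = Multiset.card s := by omega
            subst hj'
            have hcz : Multiset.card (s.map (·⁻¹)) = Multiset.card s := Multiset.card_map _ _
            rw [esymm_eq_zero_of_lt _ _ (by rw [hcz]; omega), ← hcz, esymm_card_eq_prod,
              Multiset.prod_map_inv]
            have hps : s.prod ≠ 0 := by
              rw [Ne, Multiset.prod_eq_zero_iff]; exact h0s
            rw [Nat.sub_self, esymm_zero']
            field_simp
            simp [hps]

lemma ms_cs (z : Multiset ℝ) :
    z.sum ^ 2 ≤ (Multiset.card z : ℝ) * (z.map (fun w => w ^ 2)).sum := by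
  rcases Nat.eq_zero_or_pos (Multiset.card z) with h | h
  · rw [Multiset.card_eq_zero] at h
    subst h; simp
  · set c : ℝ := (Multiset.card z : ℝ) with hc
    have hc0 : 0 < c := by rw [hc]; exact_mod_cast h
    set t : ℝ := z.sum / c with ht
    have key : 0 ≤ (z.map (fun w => (w - t) ^ 2)).sum :=
      Multiset.sum_nonneg (by
        intro x hx
        obtain ⟨w, _, rfl⟩ := Multiset.mem_map.mp hx
        positivity)
    have expand : (z.map (fun w => (w - t) ^ 2)).sum
        = (z.map (fun w => w ^ 2)).sum - 2 * t * z.sum + c * t ^ 2 := by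
      have : (z.map (fun w => (w - t) ^ 2)).sum
          = (z.map (fun w => w ^ 2 + ((-2 * t) * w + t ^ 2))).sum := by
        congr 1; apply Multiset.map_congr rfl; intro x _; ring
      rw [this, Multiset.sum_map_add, Multiset.sum_map_add, Multiset.sum_map_mul_left]
      simp only [Multiset.map_id']
      rw [Multiset.map_const', Multiset.sum_replicate, nsmul_eq_mul, hc]
      ring
    rw [expand, ht] at key
    set Q : ℝ := (z.map (fun w => w ^ 2)).sum with hQ
    have h4 : 0 ≤ Q - z.sum ^ 2 / c := by
      have h3 : Q - z.sum ^ 2 / c = Q - 2 * (z.sum / c) * z.sum + c * (z.sum / c) ^ 2 := by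
        field_simp
        ring
      rw [h3]; exact key
    have h5 : z.sum ^ 2 / c ≤ Q := by linarith
    calc z.sum ^ 2 = z.sum ^ 2 / c * c := by field_simp
      _ ≤ Q * c := mul_le_mul_of_nonneg_right h5 hc0.le
      _ = c * Q := mul_comm _ _

lemma two_esymm_two (z : Multiset ℝ) :
    2 * z.esymm 2 = z.sum ^ 2 - (z.map (fun w => w ^ 2)).sum := by
  induction z using Multiset.induction with
  | empty => simp [esymm_eq_zero_of_lt 0 2 (by simp)]
  | cons a z ih =>
      have : (a ::ₘ z).esymm 2 = z.esymm 2 + a * z.esymm 1 := esymm_cons a z 1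
      rw [this, esymm_one', Multiset.sum_cons, Multiset.map_cons, Multiset.sum_cons]
      nlinarith [ih]

lemma two_choose_two (m : ℕ) : 2 * m.choose 2 = m * (m - 1) := by
  induction m with
  | zero => rfl
  | succ m ih =>
      rw [Nat.choose_succ_succ, Nat.choose_one_right, Nat.mul_add, ih]
      cases m with
      | zero => rfl
      | succ l => simp only [Nat.succ_sub_one]; ring

noncomputable def pco (s : Multiset ℝ) (j : ℕ) : ℝ :=
  s.esymm j / ((Multiset.card s).choose j : ℝ)

lemma pco_zero (s : Multiset ℝ) : pco s 0 = 1 := by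
  simp [pco, esymm_zero']

lemma newton_base (s : Multiset ℝ) (h2 : 2 ≤ Multiset.card s) :
    pco s (Multiset.card s - 2) * pco s (Multiset.card s) ≤ pco s (Multiset.card s - 1) ^ 2 := by
  set m := Multiset.card s with hm
  have hm2 : (2:ℝ) ≤ (m:ℝ) := by exact_mod_cast h2
  rcases eq_or_ne s.prod 0 with hP | hP
  · have : pco s m = 0 := by rw [pco, esymm_card_eq_prod, hP, zero_div]
    rw [this, mul_zero]
    positivity
  · have h0 : (0:ℝ) ∉ s := by
      intro h; exact hP (Multiset.prod_eq_zero h)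
    set z : Multiset ℝ := s.map (·⁻¹) with hz
    have hcz : Multiset.card z = m := Multiset.card_map _ _
    set E1 : ℝ := z.sum with hE1
    set E2 : ℝ := z.esymm 2 with hE2
    set Q : ℝ := (z.map (fun w => w ^ 2)).sum with hQ
    set P : ℝ := s.prod with hP2
    have r0 : s.esymm m = P := esymm_card_eq_prod s
    have r1 : P * E1 = s.esymm (m - 1) := by
      have := esymm_reverse s h0 1 (by omega)
      rwa [esymm_one'] at this
    have r2 : P * E2 = s.esymm (m - 2) := esymm_reverse s h0 2 h2
    have hcs : E1 ^ 2 ≤ (m:ℝ) * Q := by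
      have := ms_cs z
      rwa [hcz] at this
    have h2e : 2 * E2 = E1 ^ 2 - Q := two_esymm_two z
    -- choose values
    have c1 : (m.choose m : ℝ) = 1 := by rw [Nat.choose_self]; norm_num
    have c2 : (m.choose (m - 1) : ℝ) = (m : ℝ) := by
      have h : m.choose (m - 1) = m.choose 1 := by
        have := Nat.choose_symm (show 1 ≤ m by omega)
        simpa using this
      rw [h, Nat.choose_one_right]
    have c3 : 2 * ((m.choose (m - 2)) : ℝ) = (m:ℝ) * ((m:ℝ) - 1) := by
      have h : m.choose (m - 2) = m.choose 2 := by
        have := Nat.choose_symm h2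
        simpa using this
      rw [h]
      have h1 : ((2 * m.choose 2 : ℕ) : ℝ) = ((m * (m - 1) : ℕ) : ℝ) := by
        rw [two_choose_two m]
      push_cast [Nat.cast_sub (show 1 ≤ m by omega)] at h1
      linarith [h1]
    have hkey : (m:ℝ)^2 * (2 * E2) ≤ (m:ℝ) * ((m:ℝ) - 1) * E1 ^ 2 := by
      rw [h2e]
      nlinarith [hcs, hm2]
    -- final
    have hC2 : (0:ℝ) < (m.choose (m - 2) : ℝ) := by
      exact_mod_cast Nat.choose_pos (show m - 2 ≤ m by omega)
    have hmpos : (0:ℝ) < (m:ℝ) := by linarith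
    rw [pco, pco, pco, r0, ← r1, ← r2, c1, c2, div_one, div_mul_eq_mul_div, div_pow,
      div_le_div_iff₀ hC2 (by positivity)]
    have hP2nn : 0 ≤ P ^ 2 := sq_nonneg P
    have hh := mul_le_mul_of_nonneg_left hkey hP2nn
    nlinarith [hh, c3]

lemma deriv_step (s : Multiset ℝ) (hs : 1 ≤ Multiset.card s) :
    ∃ y : Multiset ℝ, Multiset.card y = Multiset.card s - 1 ∧
      ∀ j ≤ Multiset.card s - 1,
        (Multiset.card s : ℝ) * y.esymm j = ((Multiset.card s - j : ℕ) : ℝ) * s.esymm j := by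
  classical
  set m := Multiset.card s with hm
  set f : Polynomial ℝ := (s.map fun a => Polynomial.X - Polynomial.C a).prod with hf
  have hfm : f.Monic :=
    monic_multiset_prod_of_monic _ _ (fun a _ => monic_X_sub_C a)
  have hfd : f.natDegree = m := natDegree_multiset_prod_X_sub_C_eq_card s
  have hfroots : f.roots = s := roots_multiset_prod_X_sub_C s
  set g := Polynomial.derivative f with hg
  have hgdle : g.natDegree ≤ m - 1 := hfd ▸ natDegree_derivative_le f
  have hcard1 : m ≤ Multiset.card g.roots + 1 := by
    have := Polynomial.card_roots_le_derivative f
    rwa [hfroots, ← hg] at this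
  have hcard2 : Multiset.card g.roots ≤ g.natDegree := Polynomial.card_roots' g
  have hyc : Multiset.card g.roots = m - 1 := by omega
  have hgd : g.natDegree = m - 1 := by omega
  have hsplit : Polynomial.Splits g := by
    rw [Polynomial.splits_iff_card_roots, hyc, hgd]
  have hgeq : g = Polynomial.C g.leadingCoeff * (g.roots.map fun a =>
      Polynomial.X - Polynomial.C a).prod := hsplit.eq_prod_roots
  have hflead : f.coeff m = 1 := by
    have := hfm.leadingCoeff
    rwa [Polynomial.leadingCoeff, hfd] at this
  have hglead : g.leadingCoeff = (m : ℝ) := by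
    rw [Polynomial.leadingCoeff, hgd, hg, Polynomial.coeff_derivative]
    have h1 : m - 1 + 1 = m := by omega
    rw [h1, hflead, one_mul]
    norm_cast
  refine ⟨g.roots, hyc, fun j hj => ?_⟩
  -- compute g.coeff (m - 1 - j) two ways
  have hcoeff1 : g.coeff (m - 1 - j) = f.coeff (m - j) * ((m - j : ℕ) : ℝ) := by
    rw [hg, Polynomial.coeff_derivative]
    have h1 : m - 1 - j + 1 = m - j := by omega
    rw [h1]
    congr 1
    exact_mod_cast congrArg (Nat.cast : ℕ → ℝ) h1
  have hfc : f.coeff (m - j) = (-1) ^ j * s.esymm j := by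
    have h := Multiset.prod_X_sub_C_coeff s (show m - j ≤ Multiset.card s by omega)
    rw [← hf] at h
    have h2 : Multiset.card s - (m - j) = j := by omega
    rwa [h2] at h
  have hgc : g.coeff (m - 1 - j) = (m : ℝ) * ((-1) ^ j * g.roots.esymm j) := by
    conv_lhs => rw [hgeq]
    rw [Polynomial.coeff_C_mul, hglead]
    have h := Multiset.prod_X_sub_C_coeff g.roots
      (show m - 1 - j ≤ Multiset.card g.roots by omega)
    rw [hyc] at h
    have h2 : m - 1 - (m - 1 - j) = j := by omega
    rw [h2] at h
    rw [h]
  have heq : (m : ℝ) * ((-1) ^ j * g.roots.esymm j)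
      = (-1) ^ j * s.esymm j * ((m - j : ℕ) : ℝ) := by
    rw [← hgc, hcoeff1, hfc]
  have hne : ((-1 : ℝ)) ^ j ≠ 0 := pow_ne_zero _ (by norm_num)
  have heq2 : (-1 : ℝ) ^ j * ((m:ℝ) * g.roots.esymm j)
      = (-1 : ℝ) ^ j * (((m - j : ℕ) : ℝ) * s.esymm j) := by
    linear_combination heq
  exact mul_left_cancel₀ hne heq2

lemma pco_step (s : Multiset ℝ) (hs : 1 ≤ Multiset.card s) :
    ∃ y : Multiset ℝ, Multiset.card y = Multiset.card s - 1 ∧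
      ∀ j ≤ Multiset.card s - 1, pco y j = pco s j := by
  obtain ⟨y, hcy, hy⟩ := deriv_step s hs
  refine ⟨y, hcy, fun j hj => ?_⟩
  have h1 := hy j hj
  have hnat : Multiset.card s * (Multiset.card s - 1).choose j
      = (Multiset.card s - j) * (Multiset.card s).choose j := by
    have h2 := Nat.add_one_mul_choose_eq (Multiset.card s - 1) j
    have hsucc : Multiset.card s - 1 + 1 = Multiset.card s := by omega
    rw [hsucc] at h2
    have h3 := Nat.choose_succ_right_eq (Multiset.card s) j
    calc Multiset.card s * (Multiset.card s - 1).choose j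
        = (Multiset.card s).choose (j + 1) * (j + 1) := h2
      _ = (Multiset.card s).choose j * (Multiset.card s - j) := h3
      _ = (Multiset.card s - j) * (Multiset.card s).choose j := Nat.mul_comm _ _
  have hcast : ((Multiset.card s - j : ℕ) : ℝ) * ((Multiset.card s).choose j : ℝ)
      = (Multiset.card s : ℝ) * (((Multiset.card s - 1).choose j : ℕ) : ℝ) := by
    exact_mod_cast congrArg (Nat.cast : ℕ → ℝ) hnat.symm
  have hm0 : (Multiset.card s : ℝ) ≠ 0 := by
    have : (0:ℝ) < (Multiset.card s : ℝ) := by exact_mod_cast hs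
    linarith
  have hpos1 : (0:ℝ) < (((Multiset.card s - 1).choose j : ℕ) : ℝ) := by
    exact_mod_cast Nat.choose_pos hj
  have hpos2 : (0:ℝ) < (((Multiset.card s).choose j : ℕ) : ℝ) := by
    exact_mod_cast Nat.choose_pos (show j ≤ Multiset.card s by omega)
  rw [pco, pco, hcy, div_eq_div_iff hpos1.ne' hpos2.ne']
  apply mul_left_cancel₀ hm0
  linear_combination ((Multiset.card s).choose j : ℝ) * h1 + s.esymm j * hcast

lemma newton_aux (d : ℕ) : ∀ s : Multiset ℝ, ∀ j, 1 ≤ j → j + 1 ≤ Multiset.card s →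
    Multiset.card s - (j + 1) = d → pco s (j - 1) * pco s (j + 1) ≤ pco s j ^ 2 := by
  induction d with
  | zero =>
      intro s j hj hjs hd
      have hcm : Multiset.card s = j + 1 := by omega
      have h := newton_base s (by omega)
      have e1 : Multiset.card s - 2 = j - 1 := by omega
      have e2 : Multiset.card s - 1 = j := by omega
      rw [e1, e2, hcm] at h
      exact h
  | succ d ih =>
      intro s j hj hjs hd
      obtain ⟨y, hcy, hy⟩ := pco_step s (by omega)
      have h1 : pco y (j - 1) = pco s (j - 1) := hy _ (by omega)
      have h2 : pco y j = pco s j := hy _ (by omega)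
      have h3 : pco y (j + 1) = pco s (j + 1) := hy _ (by omega)
      rw [← h1, ← h2, ← h3]
      exact ih y j hj (by omega) (by omega)

lemma newton (s : Multiset ℝ) (j : ℕ) (hj : 1 ≤ j) (hjs : j + 1 ≤ Multiset.card s) :
    pco s (j - 1) * pco s (j + 1) ≤ pco s j ^ 2 :=
  newton_aux (Multiset.card s - (j + 1)) s j hj hjs rfl

lemma pco_pos (s : Multiset ℝ) (k : ℕ) (hks : k ≤ Multiset.card s)
    (hpos : ∀ j, 1 ≤ j → j ≤ k → 0 < s.esymm j) :
    ∀ j ≤ k, 0 < pco s j := by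
  intro j hj
  rcases Nat.eq_zero_or_pos j with rfl | hj1
  · rw [pco_zero]; norm_num
  · apply div_pos (hpos j hj1 hj)
    exact_mod_cast Nat.choose_pos (le_trans hj hks)

lemma maclaurin_step (s : Multiset ℝ) (k : ℕ) (hks : k ≤ Multiset.card s)
    (hpos : ∀ j, 1 ≤ j → j ≤ k → 0 < s.esymm j) :
    ∀ j, j + 1 ≤ k → pco s (j + 1) ^ j ≤ pco s j ^ (j + 1) := by
  have hp := pco_pos s k hks hpos
  intro j
  induction j with
  | zero => intro _; simp [pco_zero]
  | succ j ih =>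
      intro hk
      have ihj := ih (by omega)
      have hnewton := newton s (j + 1) (by omega) (by omega)
      rw [Nat.add_sub_cancel] at hnewton
      have ha : 0 < pco s j := hp j (by omega)
      have hb : 0 < pco s (j + 1) := hp (j + 1) (by omega)
      have hc : 0 < pco s (j + 2) := hp (j + 2) (by omega)
      have key : pco s j ^ (j + 1) * pco s (j + 2) ^ (j + 1)
          ≤ pco s j ^ (j + 1) * pco s (j + 1) ^ (j + 2) := by
        calc pco s j ^ (j + 1) * pco s (j + 2) ^ (j + 1)
            = (pco s j * pco s (j + 2)) ^ (j + 1) := (mul_pow _ _ _).symm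
          _ ≤ (pco s (j + 1) ^ 2) ^ (j + 1) :=
              pow_le_pow_left₀ (mul_nonneg ha.le hc.le) hnewton (j + 1)
          _ = pco s (j + 1) ^ j * pco s (j + 1) ^ (j + 2) := by
              rw [← pow_mul, ← pow_add]
              congr 1
              omega
          _ ≤ pco s j ^ (j + 1) * pco s (j + 1) ^ (j + 2) :=
              mul_le_mul_of_nonneg_right ihj (pow_nonneg hb.le _)
      exact (mul_le_mul_iff_right₀ (pow_pos ha _)).mp key

lemma maclaurin (s : Multiset ℝ) (k : ℕ) (hks : k ≤ Multiset.card s)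
    (hpos : ∀ j, 1 ≤ j → j ≤ k → 0 < s.esymm j) (j : ℕ) (hj : 1 ≤ j) :
    ∀ m, j ≤ m → m ≤ k → pco s m ^ j ≤ pco s j ^ m := by
  have hp := pco_pos s k hks hpos
  intro m
  induction m with
  | zero => intro h1 _; omega
  | succ m ih =>
      intro hjm hmk
      rcases Nat.eq_or_lt_of_le hjm with heq | hlt
      · rw [← heq]
      · have hjm' : j ≤ m := by omega
        have ihm := ih hjm' (by omega)
        have hT : pco s (m + 1) ^ m ≤ pco s m ^ (m + 1) :=
          maclaurin_step s k hks hpos m (by omega)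
        have ha : 0 < pco s j := hp j (by omega)
        have hb : 0 < pco s m := hp m (by omega)
        have hc : 0 < pco s (m + 1) := hp (m + 1) (by omega)
        have key : (pco s (m + 1) ^ j) ^ m ≤ (pco s j ^ (m + 1)) ^ m := by
          calc (pco s (m + 1) ^ j) ^ m = (pco s (m + 1) ^ m) ^ j := by
                rw [← pow_mul, ← pow_mul, Nat.mul_comm]
            _ ≤ (pco s m ^ (m + 1)) ^ j := pow_le_pow_left₀ (pow_nonneg hc.le _) hT j
            _ = (pco s m ^ j) ^ (m + 1) := by rw [← pow_mul, ← pow_mul, Nat.mul_comm]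
            _ ≤ (pco s j ^ m) ^ (m + 1) := pow_le_pow_left₀ (pow_nonneg hb.le _) ihm (m + 1)
            _ = (pco s j ^ (m + 1)) ^ m := by rw [← pow_mul, ← pow_mul, Nat.mul_comm]
        exact le_of_pow_le_pow_left₀ (by omega) (pow_nonneg ha.le _) key

lemma key_pos (s : Multiset ℝ) (x : ℝ) (k : ℕ) (hk : 1 ≤ k) (hcard : k ≤ Multiset.card s + 1)
    (hG : ∀ j, 1 ≤ j → j ≤ k → 0 < (x ::ₘ s).esymm j) : 0 < s.esymm (k - 1) := by
  classical
  rcases Nat.eq_or_lt_of_le hk with h1 | h1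
  · rw [← h1]
    simp [esymm_zero']
  by_contra hneg
  push_neg at hneg
  have hF : ∀ j, 1 ≤ j → ∀ t : ℝ, (t ::ₘ s).esymm j = s.esymm j + t * s.esymm (j - 1) := by
    intro j hj t
    obtain ⟨j', rfl⟩ : ∃ j', j = j' + 1 := ⟨j - 1, by omega⟩
    rw [esymm_cons, Nat.add_sub_cancel]
  set A : Finset ℕ := (Finset.Icc 1 k).filter (fun j => 0 < s.esymm (j - 1)) with hA
  have h1A : (1 : ℕ) ∈ A := by
    refine Finset.mem_filter.mpr ⟨Finset.mem_Icc.mpr ⟨le_refl 1, hk⟩, ?_⟩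
    simp [esymm_zero']
  have hAne : A.Nonempty := ⟨1, h1A⟩
  set r : ℕ → ℝ := fun j => -s.esymm j / s.esymm (j - 1) with hr
  set B := A.image r with hB
  have hBne : B.Nonempty := hAne.image r
  set a := B.max' hBne with ha
  obtain ⟨j₀, hj₀A, hj₀⟩ := Finset.mem_image.mp (B.max'_mem hBne)
  have hj₀mem := Finset.mem_filter.mp hj₀A
  have hj₀1 : 1 ≤ j₀ := (Finset.mem_Icc.mp hj₀mem.1).1
  have hj₀k : j₀ ≤ k := (Finset.mem_Icc.mp hj₀mem.1).2
  have hsl : 0 < s.esymm (j₀ - 1) := hj₀mem.2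
  have haval : a = -s.esymm j₀ / s.esymm (j₀ - 1) := hj₀.symm
  have hFa0 : s.esymm j₀ + a * s.esymm (j₀ - 1) = 0 := by
    rw [haval]
    field_simp
    ring
  have hkA : j₀ ≠ k := by
    intro h
    rw [h] at hsl
    exact absurd hsl (not_lt.mpr hneg)
  have hj₀k' : j₀ < k := lt_of_le_of_ne hj₀k hkA
  have hFx : ∀ j, 1 ≤ j → j ≤ k → 0 < s.esymm j + x * s.esymm (j - 1) := by
    intro j hj hjk
    have := hG j hj hjk
    rwa [hF j hj x] at this
  have hax : a < x := by
    have h0 := hFx j₀ hj₀1 hj₀k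
    nlinarith [hFa0, hsl]
  have hmem : ∀ t, a < t → t ≤ x → ∀ j, 1 ≤ j → j ≤ k →
      0 < s.esymm j + t * s.esymm (j - 1) := by
    intro t hta htx j hj hjk
    rcases le_or_gt (s.esymm (j - 1)) 0 with hsl' | hsl'
    · have := hFx j hj hjk
      nlinarith
    · have hjA : j ∈ A := Finset.mem_filter.mpr ⟨Finset.mem_Icc.mpr ⟨hj, hjk⟩, hsl'⟩
      have hrj : r j ≤ a := B.le_max' _ (Finset.mem_image_of_mem r hjA)
      have hrt : r j < t := lt_of_le_of_lt hrj hta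
      have : -s.esymm j / s.esymm (j - 1) < t := hrt
      rw [div_lt_iff₀ hsl'] at this
      nlinarith
  set C0 : ℝ := ((Multiset.card s + 1).choose j₀ : ℝ) with hC0
  set C1 : ℝ := ((Multiset.card s + 1).choose k : ℝ) with hC1
  have hC0p : 0 < C0 := by
    rw [hC0]; exact_mod_cast Nat.choose_pos (by omega)
  have hC1p : 0 < C1 := by
    rw [hC1]; exact_mod_cast Nat.choose_pos (by omega)
  have hineq : ∀ t, a < t → t ≤ x →
      ((s.esymm k + t * s.esymm (k - 1)) / C1) ^ j₀
        ≤ ((s.esymm j₀ + t * s.esymm (j₀ - 1)) / C0) ^ k := by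
    intro t hta htx
    have hpos' : ∀ j, 1 ≤ j → j ≤ k → 0 < (t ::ₘ s).esymm j := by
      intro j hj hjk
      rw [hF j hj t]
      exact hmem t hta htx j hj hjk
    have hmac := maclaurin (t ::ₘ s) k (by rw [Multiset.card_cons]; omega) hpos'
      j₀ hj₀1 k hj₀k'.le le_rfl
    rw [pco, pco, Multiset.card_cons, hF k hk t, hF j₀ hj₀1 t] at hmac
    exact hmac
  -- explicit small t
  set sl : ℝ := s.esymm (j₀ - 1) with hsl2
  set δ : ℝ := ((s.esymm k + x * s.esymm (k - 1)) / C1) ^ j₀ with hδ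
  have hFkx : 0 < s.esymm k + x * s.esymm (k - 1) := hFx k hk le_rfl
  have hδp : 0 < δ := by
    rw [hδ]
    exact pow_pos (div_pos hFkx hC1p) _
  set ε : ℝ := min 1 δ with hε
  have hεp : 0 < ε := lt_min one_pos hδp
  set t : ℝ := min x (a + C0 * ε / (2 * sl)) with htdef
  have hta : a < t := by
    apply lt_min hax
    have : 0 < C0 * ε / (2 * sl) := by positivity
    linarith
  have htx : t ≤ x := min_le_left _ _
  have hFj₀t : s.esymm j₀ + t * sl = sl * (t - a) := by
    linear_combination hFa0
  set u : ℝ := (s.esymm j₀ + t * s.esymm (j₀ - 1)) / C0 with hu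
  have hu_pos : 0 < u := div_pos (hmem t hta htx j₀ hj₀1 hj₀k) hC0p
  have hu_small : u < ε := by
    have htb : t ≤ a + C0 * ε / (2 * sl) := min_le_right _ _
    have h1 : s.esymm j₀ + t * s.esymm (j₀ - 1) ≤ sl * (C0 * ε / (2 * sl)) := by
      rw [← hsl2, hFj₀t]
      apply mul_le_mul_of_nonneg_left _ hsl.le
      linarith
    have h2 : sl * (C0 * ε / (2 * sl)) = C0 * ε / 2 := by
      field_simp
    rw [hu, div_lt_iff₀ hC0p]
    have h6 : 0 < C0 * ε := mul_pos hC0p hεp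
    linarith [h1, h2]
  have hchain : δ ≤ u ^ k := by
    have hFkt : s.esymm k + x * s.esymm (k - 1) ≤ s.esymm k + t * s.esymm (k - 1) := by
      nlinarith [hneg, htx]
    have h3 : δ ≤ ((s.esymm k + t * s.esymm (k - 1)) / C1) ^ j₀ := by
      rw [hδ]
      apply pow_le_pow_left₀ (div_nonneg hFkx.le hC1p.le)
      gcongr
    exact le_trans h3 (hineq t hta htx)
  have hukltδ : u ^ k < δ := by
    have h4 : u ^ k ≤ u := by
      apply pow_le_of_le_one hu_pos.le _ (by omega)
      exact le_trans hu_small.le (min_le_left _ _)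
    have h5 : u < δ := lt_of_lt_of_le hu_small (min_le_right _ _)
    linarith
  linarith

lemma esym_eq {n : ℕ} (m : ℕ) (κ : Fin n → ℝ) :
    esym m κ = ((Finset.univ : Finset (Fin n)).val.map κ).esymm m :=
  (Finset.esymm_map_val κ _ m).symm

lemma esymRem_eq {n : ℕ} (m : ℕ) (κ : Fin n → ℝ) (i : Fin n) :
    esymRem m κ i = (((Finset.univ : Finset (Fin n)).erase i).val.map κ).esymm m :=
  (Finset.esymm_map_val κ _ m).symm

lemma cons_decomp {n : ℕ} (κ : Fin n → ℝ) (i : Fin n) :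
    (Finset.univ : Finset (Fin n)).val.map κ
      = κ i ::ₘ (((Finset.univ : Finset (Fin n)).erase i).val.map κ) := by
  rw [Finset.erase_val]
  conv_lhs => rw [← Multiset.cons_erase (show i ∈ (Finset.univ : Finset (Fin n)).val from
    Finset.mem_univ i)]
  rw [Multiset.map_cons]

lemma cardS {n : ℕ} (κ : Fin n → ℝ) (i : Fin n) :
    Multiset.card ((((Finset.univ : Finset (Fin n)).erase i)).val.map κ) = n - 1 := by
  rw [Multiset.card_map, ← Finset.card_def, Finset.card_erase_of_mem (Finset.mem_univ i),
    Finset.card_univ, Fintype.card_fin]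

lemma cardT {n : ℕ} (κ : Fin n → ℝ) :
    Multiset.card ((Finset.univ : Finset (Fin n)).val.map κ) = n := by
  rw [Multiset.card_map, ← Finset.card_def, Finset.card_univ, Fintype.card_fin]

end StmtAux

/-- Coefficient estimate in the gradient-decay lemma: for κ ∈ Γ_k^+ (1 ≤ k < n),
    ordered decreasingly, with σ_k ≥ c > 0 and κ_i ≤ K, the quantity
    (n−k)σ_{k−1} + κ_1 σ_{k−2}(κ|1) is bounded below by a positive constant c'
    depending only on n, k, c, K; moreover σ_{k−1} ≥ C(n,k−1)(σ_k/C(n,k))^{(k−1)/k}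
    and σ_{k−2}(κ|1) > 0. -/
theorem stmt_19 {n : ℕ} (k : ℕ) (hk : 1 ≤ k) (hkn : k < n) (c K : ℝ) (hc : 0 < c) :
    ∃ c' > 0, ∀ κ : Fin n → ℝ,
      (∀ j, 1 ≤ j → j ≤ k → 0 < esym j κ) →
      (∀ i j : Fin n, i ≤ j → κ j ≤ κ i) →
      c ≤ esym k κ → (∀ i, κ i ≤ K) →
      c' ≤ ((n : ℝ) - k) * esym (k - 1) κ
            + κ ⟨0, by omega⟩ * esymRem (k - 2) κ ⟨0, by omega⟩ ∧
      (n.choose (k - 1) : ℝ) * (esym k κ / (n.choose k : ℝ)) ^ (((k : ℝ) - 1) / k)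
          ≤ esym (k - 1) κ ∧
      0 < esymRem (k - 2) κ ⟨0, by omega⟩ := by
  classical
  open StmtAux in
  have hnk : (0:ℝ) < (n : ℝ) - k := by
    have : (k:ℝ) < (n:ℝ) := by exact_mod_cast hkn
    linarith
  have hCk1 : (0:ℝ) < (n.choose (k - 1) : ℝ) := by
    exact_mod_cast Nat.choose_pos (show k - 1 ≤ n by omega)
  have hCk : (0:ℝ) < (n.choose k : ℝ) := by
    exact_mod_cast Nat.choose_pos hkn.le
  have hexp : (0:ℝ) ≤ ((k : ℝ) - 1) / k := by
    have hk1 : (1:ℝ) ≤ (k:ℝ) := by exact_mod_cast hk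
    have hk0 : (0:ℝ) < (k:ℝ) := by linarith
    exact div_nonneg (by linarith) hk0.le
  refine ⟨((n : ℝ) - k) * (n.choose (k - 1) : ℝ)
      * ((c / (n.choose k : ℝ)) ^ (((k : ℝ) - 1) / k)), ?_, ?_⟩
  · have h3 : (0:ℝ) < c / (n.choose k : ℝ) := div_pos hc hCk
    have h4 : (0:ℝ) < (c / (n.choose k : ℝ)) ^ (((k : ℝ) - 1) / k) :=
      Real.rpow_pos_of_pos h3 _
    exact mul_pos (mul_pos hnk hCk1) h4
  intro κ hΓ hord hck hK
  set i0 : Fin n := ⟨0, by omega⟩ with hi0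
  set S : Multiset ℝ := (((Finset.univ : Finset (Fin n)).erase i0)).val.map κ with hS
  set T : Multiset ℝ := (Finset.univ : Finset (Fin n)).val.map κ with hT
  have hdec : T = κ i0 ::ₘ S := cons_decomp κ i0
  have hcS : Multiset.card S = n - 1 := cardS κ i0
  have hcT : Multiset.card T = n := cardT κ
  have hΓ' : ∀ j, 1 ≤ j → j ≤ k → 0 < T.esymm j := by
    intro j h1 h2
    rw [← esym_eq]
    exact hΓ j h1 h2
  -- third conjunct
  have hrem : 0 < esymRem (k - 2) κ i0 := by
    rw [esymRem_eq, ← hS]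
    rcases Nat.lt_or_ge k 2 with h2 | h2
    · have hk2 : k - 2 = 0 := by omega
      rw [hk2, esymm_zero']
      norm_num
    · have hkey := key_pos S (κ i0) (k - 1) (by omega) (by omega)
        (fun j h1 h2 => by rw [← hdec]; exact hΓ' j h1 (by omega))
      have hidx : k - 1 - 1 = k - 2 := by omega
      rwa [hidx] at hkey
  -- positivity of κ i0
  have hx : 0 < κ i0 := by
    have h1 : 0 < esym 1 κ := hΓ 1 le_rfl hk
    have h2 : esym 1 κ = ∑ i, κ i := by
      rw [esym_eq, esymm_one']
      rfl
    have h3 : ∑ i, κ i ≤ ∑ _i : Fin n, κ i0 := by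
      apply Finset.sum_le_sum
      intro i _
      apply hord i0 i
      simp [hi0, Fin.le_def]
    rw [Finset.sum_const, Finset.card_univ, Fintype.card_fin, nsmul_eq_mul] at h3
    rw [h2] at h1
    by_contra hcon
    push_neg at hcon
    have : (n:ℝ) * κ i0 ≤ 0 := by
      apply mul_nonpos_of_nonneg_of_nonpos _ hcon
      positivity
    linarith
  -- second conjunct (Maclaurin)
  have hmac : (n.choose (k - 1) : ℝ) * (esym k κ / (n.choose k : ℝ)) ^ (((k : ℝ) - 1) / k)
      ≤ esym (k - 1) κ := by
    rcases Nat.lt_or_ge k 2 with h2 | h2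
    · have hk1 : k = 1 := by omega
      subst hk1
      have : (((1:ℕ) : ℝ) - 1) / (1:ℕ) = 0 := by norm_num
      rw [this, Real.rpow_zero]
      rw [esym_eq, esymm_zero']
      norm_num
    · set P : ℝ := pco T k with hP
      set Q : ℝ := pco T (k - 1) with hQ
      have hkn' : k ≤ Multiset.card T := by omega
      have hPpos : 0 < P := pco_pos T k hkn' hΓ' k le_rfl
      have hQpos : 0 < Q := pco_pos T k hkn' hΓ' (k - 1) (by omega)
      have hmm := maclaurin T k hkn' hΓ' (k - 1) (by omega) k (by omega) le_rfl
      have hkR : (0:ℝ) < (k:ℝ) := by exact_mod_cast hk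
      have he : ((k:ℝ) - 1) / k = ((k - 1 : ℕ) : ℝ) * ((k:ℝ))⁻¹ := by
        rw [Nat.cast_sub hk]
        push_cast
        ring
      have step : P ^ (((k:ℝ) - 1) / k) ≤ Q := by
        calc P ^ (((k:ℝ) - 1) / k) = (P ^ (k - 1 : ℕ)) ^ (((k:ℝ))⁻¹) := by
              rw [he, Real.rpow_mul hPpos.le, Real.rpow_natCast]
          _ ≤ (Q ^ (k : ℕ)) ^ (((k:ℝ))⁻¹) :=
              Real.rpow_le_rpow (pow_nonneg hPpos.le _) hmm (inv_nonneg.mpr hkR.le)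
          _ = Q := Real.pow_rpow_inv_natCast hQpos.le (by omega)
      have hesymk : esym k κ / (n.choose k : ℝ) = P := by
        rw [esym_eq, hP, pco, hcT]
      have hesymk1 : esym (k - 1) κ = Q * (n.choose (k - 1) : ℝ) := by
        rw [esym_eq, hQ, pco, hcT, div_mul_cancel₀ _ hCk1.ne']
      rw [hesymk, hesymk1]
      have := mul_le_mul_of_nonneg_left step hCk1.le
      linarith
  refine ⟨?_, hmac, hrem⟩
  -- first conjunct
  have hmono : (c / (n.choose k : ℝ)) ^ (((k : ℝ) - 1) / k)
      ≤ (esym k κ / (n.choose k : ℝ)) ^ (((k : ℝ) - 1) / k) := by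
    apply Real.rpow_le_rpow (by positivity) _ hexp
    gcongr
  have h5 : ((n : ℝ) - k) * ((n.choose (k - 1) : ℝ)
      * ((c / (n.choose k : ℝ)) ^ (((k : ℝ) - 1) / k))) ≤ ((n : ℝ) - k) * esym (k - 1) κ := by
    apply mul_le_mul_of_nonneg_left _ hnk.le
    calc (n.choose (k - 1) : ℝ) * ((c / (n.choose k : ℝ)) ^ (((k : ℝ) - 1) / k))
        ≤ (n.choose (k - 1) : ℝ) * ((esym k κ / (n.choose k : ℝ)) ^ (((k : ℝ) - 1) / k)) :=
          mul_le_mul_of_nonneg_left hmono hCk1.le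
      _ ≤ esym (k - 1) κ := hmac
  have h6 : 0 ≤ κ i0 * esymRem (k - 2) κ i0 := le_of_lt (mul_pos hx hrem)
  calc ((n : ℝ) - k) * (n.choose (k - 1) : ℝ) * ((c / (n.choose k : ℝ)) ^ (((k : ℝ) - 1) / k))
      = ((n : ℝ) - k) * ((n.choose (k - 1) : ℝ)
        * ((c / (n.choose k : ℝ)) ^ (((k : ℝ) - 1) / k))) := by ring
    _ ≤ ((n : ℝ) - k) * esym (k - 1) κ := h5
    _ ≤ ((n : ℝ) - k) * esym (k - 1) κ + κ i0 * esymRem (k - 2) κ i0 := by linarith
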